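/- Let p = 4k+3 be a prime and R a commutative ring of characteristic 2. For i = 0,1,2 let a_i, b_i, c_i ∈ R, set Q_i = Q_p(a_i,b_i,c_i), let A_0, A_1, A_2 be p×p circulant matrices over R, and let M be the 3p×6p block matrix with block rows (Q_0 Q_1 Q_2 | A_0 A_1 A_2), (Q_2 Q_0 Q_1 | A_2 A_0 A_1), (Q_1 Q_2 Q_0 | A_1 A_2 A_0). Then the code C generated by the rows of M is self-orthogonal if and only if both: (1) Σ_{i=0}^{2} A_i A_i^T = Q_p( Σ_{i=0}^{2} (a_i^2 + b_i^2 + c_i^2) , Σ_{i=0}^{2} (a_i b_i + a_i c_i + b_i c_i + k(b_i^2 + c_i^2)) , Σ_{i=0}^{2} (a_i b_i + a_i c_i + b_i c_i + k(b_i^2 + c_i^2)) ); and (2) Σ_{i=0}^{2} A_i A_{[i+2]_3}^T = Q_p( Σ_{i=0}^{2} ( a_i a_{[i+2]_3} + b_i b_{[i+2]_3} + c_i c_{[i+2]_3} ) , Σ_{i=0}^{2} ( a_i c_{[i+2]_3} + b_i a_{[i+2]_3} + k (b_i b_{[i+2]_3} + c_i c_{[i+2]_3}) + k b_i c_{[i+2]_3}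 + (k+1) c_i b_{[i+2]_3} ) , Σ_{i=0}^{2} ( a_i b_{[i+2]_3} + c_i a_{[i+2]_3} + k (b_i b_{[i+2]_3} + c_i c_{[i+2]_3}) + (k+1) b_i c_{[i+2]_3} + k c_i b_{[i+2]_3} ) ). -/

import Mathlib

open Matrix Finset
open scoped Classical

/-- The quadratic residue circulant matrix `Q_p(a,b,c)`: the `p × p` matrix over `R`,
indexed by `ZMod p`, whose `(i,j)` entry is `a` if `i = j`, `b` if `j - i` is a
nonzero quadratic residue modulo `p`, and `c` otherwise. -/
noncomputable def Qmat (p : ℕ) {R : Type*} [CommRing R] (a b c : R) :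
    Matrix (ZMod p) (ZMod p) R :=
  Matrix.of fun i j => if i = j then a else if IsSquare (j - i) then b else c

/-- The `3×3` block circulant matrix `CIRC(B 0, B 1, B 2)` whose block rows are
`(B 0, B 1, B 2)`, `(B 2, B 0, B 1)`, `(B 1, B 2, B 0)`. -/
def blockCirc {R n : Type*} (B : ZMod 3 → Matrix n n R) :
    Matrix (ZMod 3 × n) (ZMod 3 × n) R :=
  Matrix.of fun ix jy => B (jy.1 - ix.1) ix.2 jy.2

/-- The `3p × 6p` block matrix with block rows `(Q 0, Q 1, Q 2 | A 0, A 1, A 2)`,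
`(Q 2, Q 0, Q 1 | A 2, A 0, A 1)`, `(Q 1, Q 2, Q 0 | A 1, A 2, A 0)`. -/
def Mblk {R n : Type*} (Q A : ZMod 3 → Matrix n n R) :
    Matrix (ZMod 3 × n) ((ZMod 3 × n) ⊕ (ZMod 3 × n)) R :=
  Matrix.fromCols (blockCirc Q) (blockCirc A)

section Aux

variable {p : ℕ} [Fact (Nat.Prime p)]

theorem aux_chi_conv (k : ℕ) (hpk : p = 4*k+3) (s : ZMod p) (hs : s ≠ 0) :
    ∑ t : ZMod p, quadraticChar (ZMod p) t * quadraticChar (ZMod p) (t - s) = -1 := by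
  have hchar : ringChar (ZMod p) ≠ 2 := by rw [ZMod.ringChar_zmod_n]; omega
  set χ := quadraticChar (ZMod p) with hχ
  have h1 : ∑ t : ZMod p, χ t * χ (t - s)
      = ∑ t ∈ univ.filter (· ≠ (0:ZMod p)), χ t * χ (t - s) := by
    symm
    apply Finset.sum_subset (filter_subset _ _)
    intro t _ ht
    simp only [mem_filter, mem_univ, true_and, not_not] at ht
    rw [ht, hχ, quadraticChar_zero, zero_mul]
  rw [h1]
  have h2 : ∀ t ∈ univ.filter (· ≠ (0:ZMod p)), χ t * χ (t - s) = χ (1 - s * t⁻¹) := by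
    intro t ht
    simp only [mem_filter, mem_univ, true_and] at ht
    have : t - s = t * (1 - s * t⁻¹) := by field_simp
    rw [this, _root_.map_mul, ← mul_assoc, ← sq, quadraticChar_sq_one ht, one_mul]
  rw [Finset.sum_congr rfl h2]
  have h3 : ∑ t ∈ univ.filter (· ≠ (0:ZMod p)), χ (1 - s * t⁻¹)
      = ∑ u ∈ univ.filter (· ≠ (1:ZMod p)), χ u := by
    apply Finset.sum_nbij' (fun t => 1 - s * t⁻¹) (fun u => s * (1 - u)⁻¹)
    · intro t ht
      simp only [mem_filter, mem_univ, true_and] at ht ⊢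
      intro h
      have : s * t⁻¹ = 0 := by linear_combination -h
      rcases mul_eq_zero.1 this with h' | h'
      · exact hs h'
      · exact ht (by simpa using inv_eq_zero.mp h')
    · intro u hu
      simp only [mem_filter, mem_univ, true_and] at hu ⊢
      have h1u : (1:ZMod p) - u ≠ 0 := fun h => hu (by linear_combination -h)
      exact mul_ne_zero hs (inv_ne_zero h1u)
    · intro t ht
      simp only [mem_filter, mem_univ, true_and] at ht
      have hst : s * t⁻¹ ≠ 0 := mul_ne_zero hs (inv_ne_zero ht)
      have : (1:ZMod p) - (1 - s * t⁻¹) = s * t⁻¹ := by ring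
      rw [this]
      field_simp
    · intro u hu
      simp only [mem_filter, mem_univ, true_and] at hu
      have h1u : (1:ZMod p) - u ≠ 0 := fun h => hu (by linear_combination -h)
      rw [mul_inv, inv_inv]
      field_simp
      ring
    · intros; rfl
  rw [h3]
  rw [Finset.filter_ne' univ (1:ZMod p), Finset.sum_erase_eq_sub (Finset.mem_univ _),
    quadraticChar_sum_zero hchar]
  simp [hχ]

theorem aux_chi_neg (k : ℕ) (hpk : p = 4*k+3) (s : ZMod p) :
    quadraticChar (ZMod p) (-s) = - quadraticChar (ZMod p) s := by
  have hchar : ringChar (ZMod p) ≠ 2 := by rw [ZMod.ringChar_zmod_n]; omega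
  have h1 : quadraticChar (ZMod p) (-1) = -1 := by
    rw [quadraticChar_neg_one hchar, ZMod.card, ZMod.χ₄_nat_three_mod_four (by omega)]
  calc quadraticChar (ZMod p) (-s) = quadraticChar (ZMod p) (-1 * s) := by ring_nf
    _ = _ := by rw [_root_.map_mul, h1]; ring

theorem aux_card4 (k : ℕ) (hpk : p = 4*k+3) (s : ZMod p) (hs : s ≠ 0)
    (ε ε' : ℤ) (hε : ε = 1 ∨ ε = -1) (hε' : ε' = 1 ∨ ε' = -1) :
    4 * ((((univ : Finset (ZMod p)) \ {0, s}).filter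
        (fun t => quadraticChar (ZMod p) t = ε ∧ quadraticChar (ZMod p) (t - s) = ε')).card : ℤ)
      = (p : ℤ) - 2 - ε * quadraticChar (ZMod p) s + ε' * quadraticChar (ZMod p) s - ε * ε' := by
  have hchar : ringChar (ZMod p) ≠ 2 := by rw [ZMod.ringChar_zmod_n]; omega
  set χ := quadraticChar (ZMod p) with hχ
  set E := (univ : Finset (ZMod p)) \ {0, s} with hE
  have hsub : ({0, s} : Finset (ZMod p)) ⊆ univ := subset_univ _
  have h0s : (0 : ZMod p) ≠ s := fun h => hs h.symm
  have hmem : ∀ t ∈ E, t ≠ 0 ∧ t - s ≠ 0 := by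
    intro t ht
    simp only [hE, mem_sdiff, mem_univ, true_and, mem_insert, mem_singleton, not_or] at ht
    exact ⟨ht.1, sub_ne_zero.mpr ht.2⟩
  have key : ∑ t ∈ E, (1 + ε * χ t) * (1 + ε' * χ (t - s))
      = 4 * ((E.filter (fun t => χ t = ε ∧ χ (t - s) = ε')).card : ℤ) := by
    rw [Finset.sum_congr rfl (g := fun t => if χ t = ε ∧ χ (t - s) = ε' then (4:ℤ) else 0)]
    · rw [Finset.card_filter]
      push_cast
      rw [Finset.mul_sum]
      apply Finset.sum_congr rfl
      intros; split <;> simp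
    · intro t ht
      obtain ⟨h1, h2⟩ := hmem t ht
      rcases quadraticChar_dichotomy h1 with ha | ha <;>
        rcases quadraticChar_dichotomy h2 with hb | hb <;>
        rcases hε with rfl | rfl <;> rcases hε' with rfl | rfl <;>
        simp [hχ, ha, hb]
  have hsum1 : ∑ t ∈ E, χ t = - χ s := by
    rw [hE, Finset.sum_sdiff_eq_sub hsub, Finset.sum_pair h0s]
    rw [quadraticChar_sum_zero hchar]
    simp [hχ]
  have hsum2 : ∑ t ∈ E, χ (t - s) = χ s := by
    rw [hE, Finset.sum_sdiff_eq_sub hsub, Finset.sum_pair h0s]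
    have : ∑ t : ZMod p, χ (t - s) = ∑ t : ZMod p, χ t :=
      Fintype.sum_equiv (Equiv.subRight s) _ _ (fun t => rfl)
    rw [this, quadraticChar_sum_zero hchar]
    simp [hχ, zero_sub, aux_chi_neg k hpk]
  have hsum3 : ∑ t ∈ E, χ t * χ (t - s) = -1 := by
    rw [hE, Finset.sum_sdiff_eq_sub hsub, Finset.sum_pair h0s, aux_chi_conv k hpk s hs]
    simp [hχ]
  have hcard : (E.card : ℤ) = (p : ℤ) - 2 := by
    have : E.card = p - 2 := by
      rw [hE, Finset.card_sdiff_of_subset hsub, Finset.card_univ, ZMod.card]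
      rw [Finset.card_pair h0s]
    rw [this]; push_cast; omega
  have expand : ∑ t ∈ E, (1 + ε * χ t) * (1 + ε' * χ (t - s))
      = (E.card : ℤ) + ε * (∑ t ∈ E, χ t) + ε' * (∑ t ∈ E, χ (t - s))
        + ε * ε' * (∑ t ∈ E, χ t * χ (t - s)) := by
    rw [Finset.sum_congr rfl
      (g := fun t => 1 + ε * χ t + ε' * χ (t - s) + ε * ε' * (χ t * χ (t - s)))
      (fun t _ => by ring)]
    simp only [Finset.sum_add_distrib, Finset.sum_const, nsmul_eq_mul, mul_one,
      ← Finset.mul_sum]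
  rw [← key, expand, hsum1, hsum2, hsum3, hcard]
  ring

theorem aux_cardQ (k : ℕ) (hpk : p = 4*k+3) (ε : ℤ) (hε : ε = 1 ∨ ε = -1) :
    (((univ : Finset (ZMod p)) \ {0}).filter
      (fun t => quadraticChar (ZMod p) t = ε)).card = 2*k+1 := by
  have hchar : ringChar (ZMod p) ≠ 2 := by rw [ZMod.ringChar_zmod_n]; omega
  set χ := quadraticChar (ZMod p) with hχ
  set E := (univ : Finset (ZMod p)) \ {0} with hE
  have hmem : ∀ t ∈ E, t ≠ 0 := by
    intro t ht; simpa [hE] using (Finset.mem_sdiff.mp ht).2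
  have key : ∑ t ∈ E, (1 + ε * χ t) = 2 * ((E.filter (fun t => χ t = ε)).card : ℤ) := by
    rw [Finset.card_filter]
    push_cast
    rw [Finset.mul_sum]
    apply Finset.sum_congr rfl
    intro t ht
    rcases quadraticChar_dichotomy (hmem t ht) with ha | ha <;>
      rcases hε with rfl | rfl <;> simp [hχ, ha]
  have hsum : ∑ t ∈ E, χ t = 0 := by
    rw [hE, Finset.sum_sdiff_eq_sub (subset_univ _), quadraticChar_sum_zero hchar]
    simp [hχ]
  have hcard : (E.card : ℤ) = (p : ℤ) - 1 := by
    have : E.card = p - 1 := by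
      rw [hE, Finset.card_sdiff_of_subset (subset_univ _), Finset.card_univ, ZMod.card,
        Finset.card_singleton]
    rw [this]
    have := (Fact.out : Nat.Prime p).two_le
    push_cast; omega
  have expand : ∑ t ∈ E, (1 + ε * χ t) = (E.card : ℤ) + ε * ∑ t ∈ E, χ t := by
    simp [Finset.sum_add_distrib, Finset.mul_sum]
  have h4 : 2 * ((E.filter (fun t => χ t = ε)).card : ℤ) = 2 * (2*(k:ℤ)+1) := by
    rw [← key, expand, hsum, hcard, hpk]; push_cast; ring
  have := mul_left_cancel₀ (by norm_num : (2:ℤ) ≠ 0) h4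
  exact_mod_cast this

variable {R : Type*} [CommRing R] [CharP R 2]

/-- value function of a quadratic-residue circulant -/
noncomputable def qv (a b c : R) (x : ZMod p) : R :=
  if x = 0 then a else if IsSquare x then b else c

theorem aux_conv_diag (k : ℕ) (hpk : p = 4*k+3) (a b c a' b' c' : R) :
    ∑ t : ZMod p, qv a b c t * qv a' b' c' t = a*a' + b*b' + c*c' := by
  have h2 : (2 : R) = 0 := by exact_mod_cast CharP.cast_eq_zero R 2
  set χ := quadraticChar (ZMod p) with hχ
  have h0 : ((univ : Finset (ZMod p)) \ {0}) ∪ {0} = univ := by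
    rw [Finset.sdiff_union_self_eq_union]
    simp
  have hdisj : Disjoint ((univ : Finset (ZMod p)) \ {0}) {0} := Finset.sdiff_disjoint
  rw [← h0, Finset.sum_union hdisj]
  have hzero : ∑ t ∈ ({0} : Finset (ZMod p)), qv a b c t * qv a' b' c' t = a * a' := by
    simp [qv]
  rw [hzero]
  set E := (univ : Finset (ZMod p)) \ {0} with hE
  have hmem : ∀ t ∈ E, t ≠ 0 := by
    intro t ht; simpa [hE] using (Finset.mem_sdiff.mp ht).2
  have step : ∑ t ∈ E, qv a b c t * qv a' b' c' t
      = ∑ t ∈ E, ((if χ t = 1 then b*b' else 0) + (if χ t = -1 then c*c' else 0)) := by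
    apply Finset.sum_congr rfl
    intro t ht
    have h1 := hmem t ht
    rcases quadraticChar_dichotomy h1 with ha | ha
    · have hsq : IsSquare t := (quadraticChar_one_iff_isSquare h1).mp ha
      simp [qv, h1, hsq, ha, hχ]
    · have hsq : ¬ IsSquare t := quadraticChar_neg_one_iff_not_isSquare.mp ha
      simp [qv, h1, hsq, ha, hχ]
  rw [step, Finset.sum_add_distrib, ← Finset.sum_filter, ← Finset.sum_filter,
    Finset.sum_const, Finset.sum_const, aux_cardQ k hpk 1 (Or.inl rfl),
    aux_cardQ k hpk (-1) (Or.inr rfl)]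
  simp only [nsmul_eq_mul]
  push_cast
  linear_combination (k*b*b' + k*c*c') * h2

theorem aux_conv_off (k : ℕ) (hpk : p = 4*k+3) (s : ZMod p) (hs : s ≠ 0) (a b c a' b' c' : R) :
    ∑ t : ZMod p, qv a b c t * qv a' b' c' (t - s)
      = if IsSquare s then
          a*c' + b*a' + (k:R)*(b*b'+c*c') + (k:R)*(b*c') + ((k:R)+1)*(c*b')
        else
          a*b' + c*a' + (k:R)*(b*b'+c*c') + ((k:R)+1)*(b*c') + (k:R)*(c*b') := by
  have h2 : (2 : R) = 0 := by exact_mod_cast CharP.cast_eq_zero R 2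
  set χ := quadraticChar (ZMod p) with hχ
  have h0s : (0 : ZMod p) ≠ s := fun h => hs h.symm
  have hneg : ∀ x : ZMod p, x ≠ 0 → (IsSquare (-x) ↔ ¬ IsSquare x) := by
    intro x hx
    constructor
    · intro h hcon
      have h1 : χ (-x) = 1 := (quadraticChar_one_iff_isSquare (neg_ne_zero.mpr hx)).mpr h
      have h2' : χ x = 1 := (quadraticChar_one_iff_isSquare hx).mpr hcon
      rw [aux_chi_neg k hpk, h2'] at h1
      norm_num at h1
    · intro h
      have h1 : χ x = -1 := quadraticChar_neg_one_iff_not_isSquare.mpr h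
      have : χ (-x) = 1 := by rw [aux_chi_neg k hpk, h1]; norm_num
      exact (quadraticChar_one_iff_isSquare (neg_ne_zero.mpr hx)).mp this
  have h0 : ((univ : Finset (ZMod p)) \ {0, s}) ∪ {0, s} = univ := by
    rw [Finset.sdiff_union_self_eq_union]; simp
  have hdisj : Disjoint ((univ : Finset (ZMod p)) \ {0, s}) {0, s} := Finset.sdiff_disjoint
  rw [← h0, Finset.sum_union hdisj]
  set E := (univ : Finset (ZMod p)) \ {0, s} with hE
  have hmem : ∀ t ∈ E, t ≠ 0 ∧ t - s ≠ 0 := by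
    intro t ht
    simp only [hE, Finset.mem_sdiff, mem_univ, true_and, Finset.mem_insert,
      Finset.mem_singleton, not_or] at ht
    exact ⟨ht.1, sub_ne_zero.mpr ht.2⟩
  have hpair : ∑ t ∈ ({0, s} : Finset (ZMod p)), qv a b c t * qv a' b' c' (t - s)
      = a * qv a' b' c' (-s) + qv a b c s * a' := by
    rw [Finset.sum_pair h0s]
    simp [qv, hs, zero_sub, sub_self]
  rw [hpair]
  have step : ∑ t ∈ E, qv a b c t * qv a' b' c' (t - s)
      = ∑ t ∈ E, ((if χ t = 1 ∧ χ (t-s) = 1 then b*b' else 0)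
        + (if χ t = 1 ∧ χ (t-s) = -1 then b*c' else 0)
        + (if χ t = -1 ∧ χ (t-s) = 1 then c*b' else 0)
        + (if χ t = -1 ∧ χ (t-s) = -1 then c*c' else 0)) := by
    apply Finset.sum_congr rfl
    intro t ht
    obtain ⟨h1, h1'⟩ := hmem t ht
    rcases quadraticChar_dichotomy h1 with ha | ha <;>
      rcases quadraticChar_dichotomy h1' with hb | hb
    · have := (quadraticChar_one_iff_isSquare h1).mp ha
      have := (quadraticChar_one_iff_isSquare h1').mp hb
      simp [qv, h1, h1', sub_ne_zero.mp h1', hχ, ha, hb, ‹IsSquare t›, ‹IsSquare (t - s)›]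
    · have := (quadraticChar_one_iff_isSquare h1).mp ha
      have := quadraticChar_neg_one_iff_not_isSquare.mp hb
      simp [qv, h1, h1', sub_ne_zero.mp h1', hχ, ha, hb, ‹IsSquare t›, ‹¬IsSquare (t - s)›]
    · have := quadraticChar_neg_one_iff_not_isSquare.mp ha
      have := (quadraticChar_one_iff_isSquare h1').mp hb
      simp [qv, h1, h1', sub_ne_zero.mp h1', hχ, ha, hb, ‹¬IsSquare t›, ‹IsSquare (t - s)›]
    · have := quadraticChar_neg_one_iff_not_isSquare.mp ha
      have := quadraticChar_neg_one_iff_not_isSquare.mp hb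
      simp [qv, h1, h1', sub_ne_zero.mp h1', hχ, ha, hb, ‹¬IsSquare t›, ‹¬IsSquare (t - s)›]
  rw [step]
  simp only [Finset.sum_add_distrib, ← Finset.sum_filter, Finset.sum_const, nsmul_eq_mul]
  have getcard : ∀ (ε ε' : ℤ), ε = 1 ∨ ε = -1 → ε' = 1 ∨ ε' = -1 → ∀ m : ℕ,
      (p : ℤ) - 2 - ε * χ s + ε' * χ s - ε * ε' = 4 * (m : ℤ) →
      ((E.filter (fun t => χ t = ε ∧ χ (t-s) = ε')).card : R) = (m : R) := by
    intro ε ε' hε hε' m hm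
    have h4 := aux_card4 k hpk s hs ε ε' hε hε'
    rw [← hχ] at h4
    rw [hm] at h4
    have : (E.filter (fun t => χ t = ε ∧ χ (t-s) = ε')).card = m := by
      have := mul_left_cancel₀ (by norm_num : (4:ℤ) ≠ 0) h4
      exact_mod_cast this
    rw [this]
  by_cases hsq : IsSquare s
  · have hχs : χ s = 1 := (quadraticChar_one_iff_isSquare hs).mpr hsq
    have e1 : ((E.filter (fun t => χ t = 1 ∧ χ (t-s) = 1)).card : R) = (k : R) :=
      getcard 1 1 (Or.inl rfl) (Or.inl rfl) k (by rw [hχs, hpk]; push_cast; ring)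
    have e2 : ((E.filter (fun t => χ t = 1 ∧ χ (t-s) = -1)).card : R) = (k : R) :=
      getcard 1 (-1) (Or.inl rfl) (Or.inr rfl) k (by rw [hχs, hpk]; push_cast; ring)
    have e3 : ((E.filter (fun t => χ t = -1 ∧ χ (t-s) = 1)).card : R) = ((k+1 : ℕ) : R) :=
      getcard (-1) 1 (Or.inr rfl) (Or.inl rfl) (k+1) (by rw [hχs, hpk]; push_cast; ring)
    have e4 : ((E.filter (fun t => χ t = -1 ∧ χ (t-s) = -1)).card : R) = (k : R) :=
      getcard (-1) (-1) (Or.inr rfl) (Or.inr rfl) k (by rw [hχs, hpk]; push_cast; ring)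
    rw [e1, e2, e3, e4]
    have hnsq : ¬ IsSquare (-s) := fun h => ((hneg s hs).mp h) hsq
    simp only [qv, hs, hsq, neg_eq_zero, hnsq, if_false, if_true, if_neg hs,
      if_neg (neg_ne_zero.mpr hs)]
    push_cast
    ring
  · have hχs : χ s = -1 := quadraticChar_neg_one_iff_not_isSquare.mpr hsq
    have e1 : ((E.filter (fun t => χ t = 1 ∧ χ (t-s) = 1)).card : R) = (k : R) :=
      getcard 1 1 (Or.inl rfl) (Or.inl rfl) k (by rw [hχs, hpk]; push_cast; ring)
    have e2 : ((E.filter (fun t => χ t = 1 ∧ χ (t-s) = -1)).card : R) = ((k+1:ℕ) : R) :=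
      getcard 1 (-1) (Or.inl rfl) (Or.inr rfl) (k+1) (by rw [hχs, hpk]; push_cast; ring)
    have e3 : ((E.filter (fun t => χ t = -1 ∧ χ (t-s) = 1)).card : R) = (k : R) :=
      getcard (-1) 1 (Or.inr rfl) (Or.inl rfl) k (by rw [hχs, hpk]; push_cast; ring)
    have e4 : ((E.filter (fun t => χ t = -1 ∧ χ (t-s) = -1)).card : R) = (k : R) :=
      getcard (-1) (-1) (Or.inr rfl) (Or.inr rfl) k (by rw [hχs, hpk]; push_cast; ring)
    rw [e1, e2, e3, e4]
    have hnsq : IsSquare (-s) := (hneg s hs).mpr hsq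
    simp only [qv, hs, hsq, hnsq, if_false, if_true, if_neg hs,
      if_neg (neg_ne_zero.mpr hs)]
    push_cast
    ring

theorem aux_Qmat_apply (a b c : R) (i j : ZMod p) :
    Qmat p a b c i j = qv a b c (j - i) := by
  rcases eq_or_ne i j with rfl | h
  · simp [Qmat, qv]
  · have h1 : j - i ≠ 0 := sub_ne_zero.mpr (Ne.symm h)
    simp [Qmat, qv, h, h1]

theorem aux_Qmat_mul (k : ℕ) (hpk : p = 4*k+3) (a b c a' b' c' : R) :
    Qmat p a b c * (Qmat p a' b' c')ᵀ
      = Qmat p (a*a'+b*b'+c*c')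
          (a*c' + b*a' + (k:R)*(b*b'+c*c') + (k:R)*(b*c') + ((k:R)+1)*(c*b'))
          (a*b' + c*a' + (k:R)*(b*b'+c*c') + ((k:R)+1)*(b*c') + (k:R)*(c*b')) := by
  ext i j
  rw [Matrix.mul_apply]
  simp only [Matrix.transpose_apply, aux_Qmat_apply]
  have reindex : ∑ t : ZMod p, qv a b c (t - i) * qv a' b' c' (t - j)
      = ∑ t : ZMod p, qv a b c t * qv a' b' c' (t - (j - i)) := by
    apply Fintype.sum_equiv (Equiv.addRight i).symm
    intro t
    have e1 : (Equiv.addRight i).symm t = t - i := by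
      simp [Equiv.addRight, sub_eq_add_neg]
    rw [e1]
    congr 2
    ring
  rw [reindex]
  rcases eq_or_ne i j with rfl | h
  · rw [show i - i = 0 by ring]
    simp only [sub_zero]
    rw [aux_conv_diag k hpk, qv]
    simp
  · have hs : j - i ≠ 0 := sub_ne_zero.mpr (Ne.symm h)
    rw [aux_conv_off k hpk _ hs, qv, if_neg hs]

omit [Fact (Nat.Prime p)] [CharP R 2] in
theorem aux_Qmat_sum (x y z : ZMod 3 → R) :
    ∑ i : ZMod 3, Qmat p (x i) (y i) (z i)
      = Qmat p (∑ i, x i) (∑ i, y i) (∑ i, z i) := by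
  ext u v
  simp only [Matrix.sum_apply, Qmat, Matrix.of_apply]
  rcases eq_or_ne u v with rfl | h
  · simp
  · simp only [h, if_false]
    split_ifs <;> rfl

end Aux

section Blocks

variable {R : Type*} [CommRing R]

theorem aux_span_dot {ι α : Type*} [Fintype α] (r : ι → (α → R)) :
    (∀ x ∈ Submodule.span R (Set.range r), ∀ y ∈ Submodule.span R (Set.range r),
        dotProduct x y = 0) ↔ ∀ i j, dotProduct (r i) (r j) = 0 := by
  constructor
  · intro h i j
    exact h _ (Submodule.subset_span ⟨i, rfl⟩) _ (Submodule.subset_span ⟨j, rfl⟩)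
  · intro h x hx y hy
    induction hx using Submodule.span_induction with
    | mem x hx =>
      induction hy using Submodule.span_induction with
      | mem y hy =>
        obtain ⟨i, rfl⟩ := hx
        obtain ⟨j, rfl⟩ := hy
        exact h i j
      | zero => simp [dotProduct_zero]
      | add y z _ _ hy hz => rw [dotProduct_add, hy, hz, add_zero]
      | smul t y _ hy => rw [dotProduct_smul, hy, smul_zero]
    | zero => simp [zero_dotProduct]
    | add x z _ _ hx' hz => rw [add_dotProduct, hx', hz, add_zero]
    | smul t x _ hx' => rw [smul_dotProduct, hx', smul_zero]

theorem aux_blockCirc_mul_transpose {n : Type*} [Fintype n] (B C : ZMod 3 → Matrix n n R) :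
    blockCirc B * (blockCirc C)ᵀ
      = blockCirc (fun d => ∑ u : ZMod 3, B u * (C (u - d))ᵀ) := by
  ext ⟨r, x⟩ ⟨s, y⟩
  rw [Matrix.mul_apply]
  simp only [blockCirc, Matrix.of_apply, Matrix.transpose_apply, Matrix.sum_apply]
  rw [Fintype.sum_prod_type]
  have : ∀ t : ZMod 3, ∑ z : n, B (t - r) x z * C (t - s) y z
      = (B (t - r) * (C (t - s))ᵀ) x y := by
    intro t
    rw [Matrix.mul_apply]
    simp [Matrix.transpose_apply]
  rw [Finset.sum_congr rfl (fun t _ => this t)]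
  apply Fintype.sum_equiv (Equiv.subRight r)
  intro t
  have e0 : (Equiv.subRight r) t = t - r := rfl
  rw [e0]
  have e2 : t - r - (s - r) = t - s := by ring
  rw [e2]

theorem aux_blockCirc_add {n : Type*} (B C : ZMod 3 → Matrix n n R) :
    blockCirc B + blockCirc C = blockCirc (fun d => B d + C d) := by
  ext ⟨r, x⟩ ⟨s, y⟩
  simp [blockCirc]

theorem aux_blockCirc_eq_zero_iff {n : Type*} (B : ZMod 3 → Matrix n n R) :
    blockCirc B = 0 ↔ ∀ d, B d = 0 := by
  constructor
  · intro h d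
    ext x y
    have := congrFun (congrFun h (0, x)) (d, y)
    simpa [blockCirc] using this
  · intro h
    ext ⟨r, x⟩ ⟨s, y⟩
    simp [blockCirc, h]

end Blocks

theorem stmt7 {R : Type*} [CommRing R] [CharP R 2] (p k : ℕ) [Fact (Nat.Prime p)]
    (hpk : p = 4 * k + 3) (a b c : ZMod 3 → R)
    (A : ZMod 3 → Matrix (ZMod p) (ZMod p) R)
    (hA : ∀ i, ∃ v : ZMod p → R, A i = Matrix.circulant v) :
    (∀ x ∈ Submodule.span R
        (Set.range fun i => Mblk (fun i => Qmat p (a i) (b i) (c i)) A i),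
      ∀ y ∈ Submodule.span R
        (Set.range fun i => Mblk (fun i => Qmat p (a i) (b i) (c i)) A i),
        dotProduct x y = 0) ↔
      (∑ i : ZMod 3, A i * (A i)ᵀ =
        Qmat p (∑ i : ZMod 3, ((a i) ^ 2 + (b i) ^ 2 + (c i) ^ 2))
          (∑ i : ZMod 3, (a i * b i + a i * c i + b i * c i + (k : R) * ((b i) ^ 2 + (c i) ^ 2)))
          (∑ i : ZMod 3, (a i * b i + a i * c i + b i * c i +
            (k : R) * ((b i) ^ 2 + (c i) ^ 2))) ∧
       ∑ i : ZMod 3, A i * (A (i + 2))ᵀ =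
        Qmat p (∑ i : ZMod 3, (a i * a (i + 2) + b i * b (i + 2) + c i * c (i + 2)))
          (∑ i : ZMod 3, (a i * c (i + 2) + b i * a (i + 2) +
            (k : R) * (b i * b (i + 2) + c i * c (i + 2)) + (k : R) * (b i * c (i + 2)) +
            ((k : R) + 1) * (c i * b (i + 2))))
          (∑ i : ZMod 3, (a i * b (i + 2) + c i * a (i + 2) +
            (k : R) * (b i * b (i + 2) + c i * c (i + 2)) + ((k : R) + 1) * (b i * c (i + 2)) +
            (k : R) * (c i * b (i + 2))))) := by
  have hpk' : p = 4 * k + 3 := hpk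
  have h2R : (2 : R) = 0 := by exact_mod_cast CharP.cast_eq_zero R 2
  set Q : ZMod 3 → Matrix (ZMod p) (ZMod p) R := fun i => Qmat p (a i) (b i) (c i) with hQdef
  -- characteristic-two cancellation for matrices
  have addzero : ∀ X Y : Matrix (ZMod p) (ZMod p) R, X + Y = 0 ↔ Y = X := by
    intro X Y
    constructor
    · intro h
      ext i j
      have h' := congrFun (congrFun h i) j
      simp only [Matrix.add_apply, Matrix.zero_apply] at h'
      linear_combination h' - (X i j) * h2R
    · intro h
      ext i j
      rw [h]
      simp only [Matrix.add_apply, Matrix.zero_apply]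
      linear_combination (X i j) * h2R
  -- Step 1: reduce to M * Mᵀ = 0
  rw [aux_span_dot]
  have hdot : (∀ i j, dotProduct (Mblk Q A i) (Mblk Q A j) = 0)
      ↔ Mblk Q A * (Mblk Q A)ᵀ = 0 := by
    constructor
    · intro h
      ext i j
      rw [Matrix.mul_apply]
      simpa [dotProduct, Matrix.transpose_apply] using h i j
    · intro h i j
      have := congrFun (congrFun h i) j
      rw [Matrix.mul_apply] at this
      simpa [dotProduct, Matrix.transpose_apply] using this
  rw [hdot]
  -- Step 2: compute M * Mᵀ
  have hMM : Mblk Q A * (Mblk Q A)ᵀ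
      = blockCirc (fun d => (∑ u : ZMod 3, Q u * (Q (u - d))ᵀ)
          + (∑ u : ZMod 3, A u * (A (u - d))ᵀ)) := by
    rw [Mblk, Matrix.transpose_fromCols, Matrix.fromCols_mul_fromRows,
      aux_blockCirc_mul_transpose, aux_blockCirc_mul_transpose, aux_blockCirc_add]
  have hiff : Mblk Q A * (Mblk Q A)ᵀ = 0 ↔
      ∀ d : ZMod 3, (∑ u : ZMod 3, Q u * (Q (u - d))ᵀ)
        + (∑ u : ZMod 3, A u * (A (u - d))ᵀ) = 0 := by
    rw [hMM]
    exact aux_blockCirc_eq_zero_iff _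
  rw [hiff]
  -- Step 3: identify the Q-sums
  have hQQ0 : ∑ u : ZMod 3, Q u * (Q (u - 0))ᵀ
      = Qmat p (∑ i : ZMod 3, ((a i) ^ 2 + (b i) ^ 2 + (c i) ^ 2))
          (∑ i : ZMod 3, (a i * b i + a i * c i + b i * c i + (k : R) * ((b i) ^ 2 + (c i) ^ 2)))
          (∑ i : ZMod 3, (a i * b i + a i * c i + b i * c i +
            (k : R) * ((b i) ^ 2 + (c i) ^ 2))) := by
    simp only [sub_zero, hQdef]
    rw [Finset.sum_congr rfl
      (fun u _ => aux_Qmat_mul k hpk' (a u) (b u) (c u) (a u) (b u) (c u)), aux_Qmat_sum]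
    have e1 : ∑ i : ZMod 3, (a i * a i + b i * b i + c i * c i)
        = ∑ i : ZMod 3, ((a i) ^ 2 + (b i) ^ 2 + (c i) ^ 2) :=
      Finset.sum_congr rfl fun i _ => by ring
    have e2 : ∑ i : ZMod 3, (a i * c i + b i * a i + (k:R)*(b i * b i + c i * c i)
          + (k:R)*(b i * c i) + ((k:R)+1)*(c i * b i))
        = ∑ i : ZMod 3, (a i * b i + a i * c i + b i * c i + (k : R) * ((b i) ^ 2 + (c i) ^ 2)) :=
      Finset.sum_congr rfl fun i _ => by linear_combination (k * b i * c i) * h2R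
    have e3 : ∑ i : ZMod 3, (a i * b i + c i * a i + (k:R)*(b i * b i + c i * c i)
          + ((k:R)+1)*(b i * c i) + (k:R)*(c i * b i))
        = ∑ i : ZMod 3, (a i * b i + a i * c i + b i * c i + (k : R) * ((b i) ^ 2 + (c i) ^ 2)) :=
      Finset.sum_congr rfl fun i _ => by linear_combination (k * b i * c i) * h2R
    rw [e1, e2, e3]
  have hsub1 : ∀ u : ZMod 3, u - 1 = u + 2 := by decide
  have hQQ1 : ∑ u : ZMod 3, Q u * (Q (u - 1))ᵀ
      = Qmat p (∑ i : ZMod 3, (a i * a (i + 2) + b i * b (i + 2) + c i * c (i + 2)))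
          (∑ i : ZMod 3, (a i * c (i + 2) + b i * a (i + 2) +
            (k : R) * (b i * b (i + 2) + c i * c (i + 2)) + (k : R) * (b i * c (i + 2)) +
            ((k : R) + 1) * (c i * b (i + 2))))
          (∑ i : ZMod 3, (a i * b (i + 2) + c i * a (i + 2) +
            (k : R) * (b i * b (i + 2) + c i * c (i + 2)) + ((k : R) + 1) * (b i * c (i + 2)) +
            (k : R) * (c i * b (i + 2)))) := by
    simp only [hsub1, hQdef]
    rw [Finset.sum_congr rfl
      (fun u _ => aux_Qmat_mul k hpk' (a u) (b u) (c u) (a (u+2)) (b (u+2)) (c (u+2))),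
      aux_Qmat_sum]
  have hA1 : ∑ u : ZMod 3, A u * (A (u - 1))ᵀ = ∑ i : ZMod 3, A i * (A (i + 2))ᵀ := by
    simp only [hsub1]
  have hA0 : ∑ u : ZMod 3, A u * (A (u - 0))ᵀ = ∑ i : ZMod 3, A i * (A i)ᵀ := by
    simp only [sub_zero]
  -- transpose-shift: condition for d = 2 follows from condition for d = 1
  have shift : ∀ (X Y : ZMod 3 → Matrix (ZMod p) (ZMod p) R),
      (∑ u : ZMod 3, X u * (X (u - 1))ᵀ = ∑ u : ZMod 3, Y u * (Y (u - 1))ᵀ) →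
      ∑ u : ZMod 3, X u * (X (u - 2))ᵀ = ∑ u : ZMod 3, Y u * (Y (u - 2))ᵀ := by
    intro X Y h
    have r1 : ∀ (Z : ZMod 3 → Matrix (ZMod p) (ZMod p) R),
        (∑ u : ZMod 3, Z u * (Z (u - 1))ᵀ)ᵀ = ∑ u : ZMod 3, Z u * (Z (u - 2))ᵀ := by
      intro Z
      rw [Matrix.transpose_sum]
      simp only [Matrix.transpose_mul, Matrix.transpose_transpose]
      apply Fintype.sum_equiv (Equiv.subRight (1 : ZMod 3))
      intro t
      have e0 : (Equiv.subRight (1 : ZMod 3)) t = t - 1 := rfl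
      rw [e0]
      have e2 : ∀ x : ZMod 3, x - 1 - 2 = x := by decide
      rw [e2]
    rw [← r1 X, ← r1 Y, h]
  constructor
  · intro h
    constructor
    · have h0 := (addzero _ _).mp (h 0)
      rw [hA0, hQQ0] at h0
      exact h0
    · have h1 := (addzero _ _).mp (h 1)
      rw [hA1, hQQ1] at h1
      exact h1
  · rintro ⟨hc1, hc2⟩ d
    have htri : ∀ d : ZMod 3, d = 0 ∨ d = 1 ∨ d = 2 := by decide
    have hd1 : ∑ u : ZMod 3, A u * (A (u - 1))ᵀ = ∑ u : ZMod 3, Q u * (Q (u - 1))ᵀ := by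
      rw [hA1, hQQ1]; exact hc2
    rcases htri d with rfl | rfl | rfl
    · exact (addzero _ _).mpr (by rw [hA0, hQQ0]; exact hc1)
    · exact (addzero _ _).mpr hd1
    · exact (addzero _ _).mpr (shift A Q hd1)
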